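/- Let (W,S) be a Coxeter system, X, Y ⊆ S, and w ∈ W an element that is (X,Y)-reduced (of minimal length in W_X·w·W_Y). Then w·W_Y·w⁻¹ ∩ W_X is a standard parabolic subgroup: there exist X₁ ⊆ X and Y₁ ⊆ Y with w·Y₁·w⁻¹ = (w·Y·w⁻¹) ∩ X = X₁ (as subsets of W), and w·W_Y·w⁻¹ ∩ W_X = W_{X₁} = w·W_{Y₁}·w⁻¹. -/

import Mathlib

/-- The standard parabolic subgroup of a Coxeter system generated by the simple reflections
indexed by `X`. -/
def CoxeterSystem.standardParabolic {B W : Type*} [Group W] {M : CoxeterMatrix B}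
    (cs : CoxeterSystem M W) (X : Set B) : Subgroup W :=
  Subgroup.closure (cs.simple '' X)

namespace CoxAux

open List CoxeterSystem
open scoped Classical

variable {B W : Type*} [Group W] {M : CoxeterMatrix B} (cs : CoxeterSystem M W)

local prefix:100 "σ" => cs.simple
local prefix:100 "π" => cs.wordProd
local prefix:100 "ℓ" => cs.length

private lemma pair_eq {α β : Type*} {a c : α} {b d : β} (h1 : a = c) (h2 : b = d) :
    (a, b) = (c, d) := by rw [h1, h2]

/-! ### The parity permutation representation -/

/-- The underlying function of the parity permutation attached to a simple generator. -/
noncomputable def preP (i : B) : W × ZMod 2 → W × ZMod 2 :=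
  fun q => (σ i * q.1 * σ i, q.2 + if q.1 = σ i then 1 else 0)

lemma simple_conj_eq_iff (i : B) (x : W) : σ i * x * σ i = σ i ↔ x = σ i := by
  constructor
  · intro h
    have := congrArg (fun z => σ i * z * σ i) h
    simpa [mul_assoc, cs.simple_mul_simple_cancel_left, cs.simple_mul_simple_self]
      using this
  · rintro rfl
    simp [mul_assoc, cs.simple_mul_simple_cancel_left, cs.simple_mul_simple_self]

lemma preP_involutive (i : B) : Function.Involutive (preP cs i) := by
  rintro ⟨x, ε⟩
  unfold preP
  simp only
  apply pair_eq
  · simp [mul_assoc, cs.simple_mul_simple_cancel_left, cs.simple_mul_simple_self]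
  · rw [if_congr (simple_conj_eq_iff cs i x) rfl rfl]
    by_cases h : x = σ i
    · rw [if_pos h, add_assoc, show (1 : ZMod 2) + 1 = 0 from rfl, add_zero]
    · rw [if_neg h, add_zero, add_zero]

/-- The parity permutation attached to a simple generator. -/
noncomputable def P (i : B) : Equiv.Perm (W × ZMod 2) := (preP_involutive cs i).toPerm

lemma P_apply (i : B) (q : W × ZMod 2) : P cs i q = preP cs i q := rfl

/-- One step of the dihedral computation. -/
lemma P_mul_apply (i i' : B) (t : W) (ε : ZMod 2) :
    (P cs i * P cs i') (t, ε) =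
      ((σ i * σ i') * t * (σ i * σ i')⁻¹,
        ε + ((if t = σ i' then 1 else 0) + (if σ i' * t * σ i' = σ i then 1 else 0))) := by
  show preP cs i (preP cs i' (t, ε)) = _
  unfold preP
  simp only
  apply pair_eq
  · rw [mul_inv_rev, cs.inv_simple, cs.inv_simple]
    group
  · rw [add_assoc]

lemma simple_mul_pow (i i' : B) (n : ℕ) :
    σ i' * (σ i * σ i') ^ n = ((σ i * σ i') ^ n)⁻¹ * σ i' := by
  have K1 : σ i' * (σ i * σ i') = (σ i * σ i')⁻¹ * σ i' := by
    rw [mul_inv_rev, cs.inv_simple, cs.inv_simple, mul_assoc]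
  induction n with
  | zero => simp
  | succ n ih =>
    calc σ i' * (σ i * σ i') ^ (n + 1)
        = ((σ i * σ i') ^ n)⁻¹ * ((σ i * σ i')⁻¹ * σ i') := by
          rw [pow_succ, ← mul_assoc, ih, mul_assoc, K1]
      _ = ((σ i * σ i') ^ (n + 1))⁻¹ * σ i' := by
          rw [← mul_assoc, ← mul_inv_rev, ← pow_succ']

lemma cond_one (i i' : B) (t : W) (n : ℕ) :
    (σ i * σ i') ^ n * t * ((σ i * σ i') ^ n)⁻¹ = σ i' ↔
      t = ((σ i * σ i') ^ (2 * n))⁻¹ * σ i' := by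
  set p := σ i * σ i' with hp
  have h2n : p ^ (2 * n) = p ^ n * p ^ n := by rw [two_mul, pow_add]
  constructor
  · intro h
    have h3 : p ^ n * t = σ i' * p ^ n := by
      have := congrArg (· * p ^ n) h
      simpa [inv_mul_cancel_right] using this
    rw [simple_mul_pow cs i i' n] at h3
    have h4 : t = (p ^ n)⁻¹ * ((p ^ n)⁻¹ * σ i') := by
      rw [← h3, inv_mul_cancel_left]
    rw [h4, h2n, mul_inv_rev (p ^ n) (p ^ n)]
    simp only [mul_assoc]
  · intro h
    rw [h, h2n, mul_inv_rev (p ^ n) (p ^ n)]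
    have h5 : p ^ n * ((p ^ n)⁻¹ * (p ^ n)⁻¹ * σ i') = (p ^ n)⁻¹ * σ i' := by
      rw [mul_assoc ((p ^ n)⁻¹), mul_inv_cancel_left]
    rw [h5, ← simple_mul_pow cs i i' n, mul_inv_cancel_right]

lemma cond_two (i i' : B) (t : W) (n : ℕ) :
    σ i' * ((σ i * σ i') ^ n * t * ((σ i * σ i') ^ n)⁻¹) * σ i' = σ i ↔
      t = ((σ i * σ i') ^ (2 * n + 1))⁻¹ * σ i' := by
  set p := σ i * σ i' with hp
  have hpinv : p⁻¹ = σ i' * σ i := by rw [hp, mul_inv_rev, cs.inv_simple, cs.inv_simple]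
  have hsis : σ i' * σ i * σ i' = p⁻¹ * σ i' := by rw [hpinv]
  have h2n : p ^ (2 * n + 1) = p ^ n * (p * p ^ n) := by
    rw [show 2 * n + 1 = n + (1 + n) by ring, pow_add, pow_add, pow_one]
  have hstep : (σ i' * (p ^ n * t * (p ^ n)⁻¹) * σ i' = σ i) ↔
      (p ^ n * t * (p ^ n)⁻¹ = p⁻¹ * σ i') := by
    rw [← hsis]
    constructor
    · intro h
      have := congrArg (fun z => σ i' * z * σ i') h
      simpa [mul_assoc, cs.simple_mul_simple_cancel_left, cs.simple_mul_simple_self]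
        using this
    · intro h
      rw [h]
      simp [mul_assoc, cs.simple_mul_simple_cancel_left, cs.simple_mul_simple_self]
  rw [hstep]
  constructor
  · intro h
    have h3 : p ^ n * t = p⁻¹ * σ i' * p ^ n := by
      have := congrArg (· * p ^ n) h
      simpa [inv_mul_cancel_right] using this
    rw [mul_assoc, simple_mul_pow cs i i' n] at h3
    have h4 : t = (p ^ n)⁻¹ * (p⁻¹ * ((p ^ n)⁻¹ * σ i')) := by
      rw [← h3, inv_mul_cancel_left]
    rw [h4, h2n, mul_inv_rev (p ^ n) (p * p ^ n), mul_inv_rev p (p ^ n)]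
    simp only [mul_assoc]
  · intro h
    rw [h, h2n, mul_inv_rev (p ^ n) (p * p ^ n), mul_inv_rev p (p ^ n)]
    have h5 : p ^ n * ((p ^ n)⁻¹ * p⁻¹ * (p ^ n)⁻¹ * σ i') = p⁻¹ * ((p ^ n)⁻¹ * σ i') := by
      simp only [mul_assoc, mul_inv_cancel_left]
    rw [h5, ← simple_mul_pow cs i i' n, mul_assoc, mul_inv_cancel_right]

/-- The `k`-th power of the product of two parity permutations. -/
lemma P_mul_pow_apply (i i' : B) (k : ℕ) (t : W) (ε : ZMod 2) :
    ((P cs i * P cs i') ^ k) (t, ε) =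
      ((σ i * σ i') ^ k * t * ((σ i * σ i') ^ k)⁻¹,
        ε + ∑ n ∈ Finset.range k,
          ((if t = ((σ i * σ i') ^ (2 * n))⁻¹ * σ i' then (1 : ZMod 2) else 0)
           + (if t = ((σ i * σ i') ^ (2 * n + 1))⁻¹ * σ i' then 1 else 0))) := by
  induction k with
  | zero => simp
  | succ k ih =>
    rw [pow_succ', Equiv.Perm.mul_apply, ih, P_mul_apply]
    simp only [cond_one cs i i' t k, cond_two cs i i' t k]
    apply pair_eq
    · rw [show (σ i * σ i') ^ (k + 1) = (σ i * σ i') * (σ i * σ i') ^ k from pow_succ' _ _,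
        mul_inv_rev ((σ i * σ i')) ((σ i * σ i') ^ k)]
      simp only [mul_assoc]
    · rw [Finset.sum_range_succ]; ring

lemma P_liftable : M.IsLiftable (fun i => (P cs i : Equiv.Perm (W × ZMod 2))) := by
  intro i i'
  apply Equiv.ext
  rintro ⟨t, ε⟩
  have hp : (σ i * σ i') ^ M i i' = 1 := cs.simple_mul_simple_pow i i'
  show ((P cs i * P cs i') ^ M i i') (t, ε) = (t, ε)
  rw [P_mul_pow_apply]
  apply pair_eq
  · rw [hp]; simp
  · set f : ℕ → ZMod 2 :=
      fun n => if t = ((σ i * σ i') ^ n)⁻¹ * σ i' then (1 : ZMod 2) else 0 with hf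
    have hsum : ∀ m : ℕ, ∑ n ∈ Finset.range m, (f (2 * n) + f (2 * n + 1))
        = ∑ n ∈ Finset.range (2 * m), f n := by
      intro m
      induction m with
      | zero => simp
      | succ m ihm =>
        rw [Finset.sum_range_succ, ihm, show 2 * (m + 1) = (2 * m) + 1 + 1 by ring,
          Finset.sum_range_succ, Finset.sum_range_succ, add_assoc]
    have hper : ∀ n, f (M i i' + n) = f n := by
      intro n
      simp only [hf, pow_add, hp, one_mul]
    have h2m : ∑ n ∈ Finset.range (2 * M i i'), f n = 0 := by
      rw [two_mul, Finset.sum_range_add]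
      have he : ∑ n ∈ Finset.range (M i i'), f (M i i' + n)
          = ∑ n ∈ Finset.range (M i i'), f n :=
        Finset.sum_congr rfl (fun n _ => hper n)
      rw [he]
      exact CharTwo.add_self_eq_zero _
    show ε + ∑ n ∈ Finset.range (M i i'), (f (2 * n) + f (2 * n + 1)) = ε
    rw [hsum, h2m, add_zero]

/-- The parity representation `W →* Perm (W × ZMod 2)`. -/
noncomputable def phi : W →* Equiv.Perm (W × ZMod 2) :=
  cs.lift ⟨fun i => P cs i, P_liftable cs⟩

lemma phi_simple (i : B) : phi cs (σ i) = P cs i :=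
  cs.lift_apply_simple (P_liftable cs) i

lemma phi_wordProd (ω : List B) (t : W) (ε : ZMod 2) :
    phi cs (π ω) (t, ε)
      = (π ω * t * (π ω)⁻¹, ε + (((cs.rightInvSeq ω).count t : ℕ) : ZMod 2)) := by
  induction ω generalizing ε with
  | nil => simp
  | cons i ω ih =>
    rw [cs.wordProd_cons, map_mul, Equiv.Perm.mul_apply, ih, phi_simple, P_apply]
    unfold preP
    simp only
    have hcond : (π ω * t * (π ω)⁻¹ = σ i) ↔ ((π ω)⁻¹ * σ i * π ω = t) := by
      constructor
      · intro h; rw [← h]; group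
      · intro h; rw [← h]; group
    apply pair_eq
    · rw [mul_inv_rev, cs.inv_simple]
      group
    · have hris : cs.rightInvSeq (i :: ω) = ((π ω)⁻¹ * σ i * π ω) :: cs.rightInvSeq ω := rfl
      rw [hris, List.count_cons]
      by_cases h : (π ω)⁻¹ * σ i * π ω = t
      · rw [if_pos (hcond.mpr h), if_pos (beq_iff_eq.mpr h)]
        push_cast
        ring
      · rw [if_neg (fun hc => h (hcond.mp hc)), if_neg (by simpa using h)]
        push_cast
        ring

/-- The parity of the number of occurrences of `t` in the right inversion sequence of a word
for `w`; well defined independently of the word. -/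
noncomputable def Nf (w t : W) : ZMod 2 := (phi cs w (t, 0)).2

lemma count_ris_eq_Nf (ω : List B) (t : W) :
    (((cs.rightInvSeq ω).count t : ℕ) : ZMod 2) = Nf cs (π ω) t := by
  simp [Nf, phi_wordProd]

lemma phi_apply (w t : W) (ε : ZMod 2) :
    phi cs w (t, ε) = (w * t * w⁻¹, ε + Nf cs w t) := by
  obtain ⟨ω, rfl⟩ := cs.wordProd_surjective w
  rw [phi_wordProd, count_ris_eq_Nf]

lemma Nf_mul (w w' t : W) :
    Nf cs (w * w') t = Nf cs w' t + Nf cs w (w' * t * w'⁻¹) := by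
  have h : phi cs (w * w') (t, 0) = phi cs w (phi cs w' (t, 0)) := by
    rw [map_mul]; rfl
  rw [phi_apply, phi_apply, phi_apply] at h
  have := congrArg Prod.snd h
  simpa using this

lemma Nf_one (t : W) : Nf cs 1 t = 0 := by
  simp [Nf]

lemma Nf_simple_self (i : B) : Nf cs (σ i) (σ i) = 1 := by
  rw [Nf, phi_simple, P_apply]
  unfold preP
  simp

lemma Nf_refl_self (t : W) (ht : cs.IsReflection t) : Nf cs t t = 1 := by
  obtain ⟨u, i, rfl⟩ := ht
  have h2 : u⁻¹ * (u * σ i * u⁻¹) * u⁻¹⁻¹ = σ i := by group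
  have h1 : Nf cs ((u * σ i) * u⁻¹) (u * σ i * u⁻¹)
      = Nf cs u⁻¹ (u * σ i * u⁻¹) + Nf cs (u * σ i) (σ i) := by
    rw [Nf_mul cs (u * σ i) u⁻¹ (u * σ i * u⁻¹), h2]
  have h4 : σ i * σ i * (σ i)⁻¹ = σ i := by group
  have h3 : Nf cs (u * σ i) (σ i) = 1 + Nf cs u (σ i) := by
    rw [Nf_mul cs u (σ i) (σ i), h4, Nf_simple_self]
  have h5 : Nf cs u⁻¹ (u * σ i * u⁻¹) + Nf cs u (σ i) = 0 := by
    have h6 : Nf cs (u * u⁻¹) (u * σ i * u⁻¹)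
        = Nf cs u⁻¹ (u * σ i * u⁻¹) + Nf cs u (σ i) := by
      rw [Nf_mul cs u u⁻¹ (u * σ i * u⁻¹), h2]
    rw [← h6, show u * u⁻¹ = 1 from by group, Nf_one]
  have h7 : Nf cs (u * σ i * u⁻¹) (u * σ i * u⁻¹)
      = Nf cs u⁻¹ (u * σ i * u⁻¹) + (1 + Nf cs u (σ i)) := by rw [← h3, ← h1]
  rw [h7]
  linear_combination h5

lemma Nf_eq_zero_of_le (w t : W) (ht : cs.IsReflection t) (h : ℓ w ≤ ℓ (w * t)) :
    Nf cs w t = 0 := by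
  by_contra hne
  obtain ⟨ω, hlen, rfl⟩ := cs.exists_reduced_word w
  have hred : cs.IsReduced ω := hlen
  have hcount : (((cs.rightInvSeq ω).count t : ℕ) : ZMod 2) ≠ 0 := by
    rw [count_ris_eq_Nf]; exact hne
  have hmem : t ∈ cs.rightInvSeq ω := by
    by_contra hnm
    rw [List.count_eq_zero_of_not_mem hnm] at hcount
    simp at hcount
  have hinv := (cs.isRightInversion_of_mem_rightInvSeq hred hmem).2
  omega

/-- **Strong exchange**: a right inversion of `π ω` occurs in the right inversion sequence of
the reduced word `ω`. -/
lemma mem_rightInvSeq_of_lt {ω : List B} (hred : cs.IsReduced ω) {t : W}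
    (ht : cs.IsReflection t) (hlt : ℓ (π ω * t) < ℓ (π ω)) :
    t ∈ cs.rightInvSeq ω := by
  have htt : t * t = 1 := ht.mul_self
  have h0 : Nf cs (π ω * t) t = 0 := by
    apply Nf_eq_zero_of_le cs _ t ht
    rw [mul_assoc, htt, mul_one]
    omega
  have h1 : Nf cs (π ω) t = 1 := by
    have hx : Nf cs ((π ω * t) * t) t = Nf cs t t + Nf cs (π ω * t) (t * t * t⁻¹) :=
      Nf_mul cs (π ω * t) t t
    rw [show t * t * t⁻¹ = t from by group, h0, add_zero, Nf_refl_self cs t ht,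
      mul_assoc, htt, mul_one] at hx
    exact hx
  by_contra hnm
  rw [← count_ris_eq_Nf, List.count_eq_zero_of_not_mem hnm] at h1
  simp at h1

/-- Right exchange in `eraseIdx` form. -/
lemma exists_eraseIdx_of_lt {ω : List B} (hred : cs.IsReduced ω) {t : W}
    (ht : cs.IsReflection t) (hlt : ℓ (π ω * t) < ℓ (π ω)) :
    ∃ j, j < ω.length ∧ π ω * t = π (ω.eraseIdx j) := by
  have hmem := mem_rightInvSeq_of_lt cs hred ht hlt
  obtain ⟨j, hj, hgt⟩ := List.mem_iff_getElem.mp hmem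
  rw [cs.length_rightInvSeq] at hj
  refine ⟨j, hj, ?_⟩
  have hgd : (cs.rightInvSeq ω).getD j 1 = t := by
    rw [List.getD_eq_getElem _ _ (by rwa [cs.length_rightInvSeq])]
    exact hgt
  rw [← hgd]
  exact cs.wordProd_mul_getD_rightInvSeq ω j

/-- Left exchange, in the form needed for the deletion argument. -/
lemma exists_word_of_left_descent {ω : List B} (hred : cs.IsReduced ω) {t : W}
    (ht : cs.IsReflection t) (hlt : ℓ (t * π ω) < ℓ (π ω)) :
    ∃ β : List B, β.length + 1 = ω.length ∧ (∀ b ∈ β, b ∈ ω) ∧ t * π ω = π β := by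
  have hred' : cs.IsReduced ω.reverse := (cs.isReduced_reverse_iff ω).mpr hred
  have hℓ : ℓ (π ω.reverse * t) < ℓ (π ω.reverse) := by
    rw [cs.wordProd_reverse]
    have h1 : ((π ω)⁻¹ * t)⁻¹ = t * π ω := by rw [mul_inv_rev, ht.inv]; group
    rw [show ℓ ((π ω)⁻¹ * t) = ℓ (t * π ω) from by rw [← cs.length_inv, h1], cs.length_inv]
    exact hlt
  obtain ⟨j, hj, heq⟩ := exists_eraseIdx_of_lt cs hred' ht hℓ
  refine ⟨(ω.reverse.eraseIdx j).reverse, ?_, ?_, ?_⟩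
  · rw [List.length_reverse, List.length_eraseIdx_add_one (by simpa using hj)]
    simp
  · intro b hb
    rw [List.mem_reverse] at hb
    have := List.mem_of_mem_eraseIdx hb
    simpa using this
  · have h2 : t * π ω = (π (ω.reverse.eraseIdx j))⁻¹ := by
      rw [← heq, mul_inv_rev, ht.inv, cs.wordProd_reverse, inv_inv]
    rw [cs.wordProd_reverse, h2]

/-- Deletion: every word can be shrunk to a reduced word with the same product, using only
letters from the original word. -/
lemma exists_reduced_sublist (ω : List B) :
    ∃ β, cs.IsReduced β ∧ π β = π ω ∧ ∀ b ∈ β, b ∈ ω := by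
  induction ω with
  | nil => exact ⟨[], by simp [CoxeterSystem.IsReduced], rfl, by simp⟩
  | cons i ω ih =>
    obtain ⟨β', hred', hprod', hsub'⟩ := ih
    by_cases h : cs.IsReduced (i :: β')
    · refine ⟨i :: β', h, by rw [cs.wordProd_cons, cs.wordProd_cons, hprod'], ?_⟩
      intro b hb
      rcases List.mem_cons.mp hb with h1 | h1
      · exact h1 ▸ List.mem_cons_self
      · exact List.mem_cons_of_mem i (hsub' b h1)
    · have hred'eq : ℓ (π β') = β'.length := hred'
      have hlt : ℓ (σ i * π β') < ℓ (π β') := by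
        rcases cs.length_simple_mul (π β') i with h1 | h1
        · exfalso
          apply h
          show ℓ (π (i :: β')) = (i :: β').length
          rw [cs.wordProd_cons, h1, hred'eq]
          simp
        · have hne := cs.length_simple_mul_ne (π β') i
          omega
      obtain ⟨β, hlen, hsub, hprod⟩ := exists_word_of_left_descent cs hred'
        (cs.isReflection_simple i) hlt
      refine ⟨β, ?_, ?_, ?_⟩
      · show ℓ (π β) = β.length
        rw [← hprod]
        rcases cs.length_simple_mul (π β') i with h1 | h1 <;> omega
      · rw [← hprod, cs.wordProd_cons, hprod']
      · intro b hb
        exact List.mem_cons_of_mem i (hsub' b (hsub b hb))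

/-! ### Standard parabolic subgroups -/

lemma mem_standardParabolic_iff (X : Set B) (w : W) :
    w ∈ cs.standardParabolic X ↔ ∃ ω : List B, (∀ b ∈ ω, b ∈ X) ∧ w = π ω := by
  constructor
  · intro hw
    have hw' : w ∈ Subgroup.closure (cs.simple '' X) := hw
    clear hw
    induction hw' using Subgroup.closure_induction with
    | mem x hx =>
      obtain ⟨b, hb, rfl⟩ := hx
      exact ⟨[b], by simpa using hb, by simp⟩
    | one => exact ⟨[], by simp, by simp⟩
    | mul x y hx hy ihx ihy =>
      obtain ⟨ωx, hωx, rfl⟩ := ihx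
      obtain ⟨ωy, hωy, rfl⟩ := ihy
      refine ⟨ωx ++ ωy, ?_, (cs.wordProd_append ωx ωy).symm⟩
      intro b hb
      rcases List.mem_append.mp hb with h | h
      exacts [hωx b h, hωy b h]
    | inv x hx ihx =>
      obtain ⟨ω, hω, rfl⟩ := ihx
      exact ⟨ω.reverse, fun b hb => hω b (List.mem_reverse.mp hb),
        (cs.wordProd_reverse ω).symm⟩
  · rintro ⟨ω, hω, rfl⟩
    induction ω with
    | nil => simpa using one_mem _
    | cons i ω ih =>
      rw [cs.wordProd_cons]
      exact mul_mem (Subgroup.subset_closure ⟨i, hω i (List.mem_cons_self), rfl⟩)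
        (ih (fun b hb => hω b (List.mem_cons_of_mem i hb)))

lemma exists_reduced_word_subset (X : Set B) (w : W) (hw : w ∈ cs.standardParabolic X) :
    ∃ ω : List B, cs.IsReduced ω ∧ (∀ b ∈ ω, b ∈ X) ∧ w = π ω := by
  obtain ⟨ω, hω, rfl⟩ := (mem_standardParabolic_iff cs X w).mp hw
  obtain ⟨β, hred, hprod, hsub⟩ := exists_reduced_sublist cs ω
  exact ⟨β, hred, fun b hb => hω b (hsub b hb), hprod.symm⟩

lemma simple_mem_standardParabolic {X : Set B} {x : B} (hx : x ∈ X) :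
    σ x ∈ cs.standardParabolic X :=
  Subgroup.subset_closure ⟨x, hx, rfl⟩

/-! ### Length additivity for minimal coset representatives -/

lemma length_mul_right_of_min (Y : Set B) (w : W)
    (hmin : ∀ u ∈ cs.standardParabolic Y, ℓ w ≤ ℓ (w * u)) :
    ∀ u ∈ cs.standardParabolic Y, ℓ (w * u) = ℓ w + ℓ u := by
  suffices H : ∀ n : ℕ, ∀ u ∈ cs.standardParabolic Y, ℓ u = n → ℓ (w * u) = ℓ w + n by
    intro u hu; exact H (ℓ u) u hu rfl
  intro n
  induction n using Nat.strong_induction_on with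
  | _ n ih =>
    intro u hu hn
    rcases Nat.eq_zero_or_pos n with h0 | hpos
    · subst h0
      rw [cs.length_eq_zero_iff] at hn
      subst hn
      simp
    obtain ⟨υ, hυred, hυY, rfl⟩ := exists_reduced_word_subset cs Y u hu
    have hυeq : ℓ (π υ) = υ.length := hυred
    have hυlen : υ.length = n := by rw [← hυeq]; exact hn
    have hne : υ ≠ [] := by intro hx; rw [hx] at hυlen; simp at hυlen; omega
    set y := υ.getLast hne with hy
    set υ' := υ.dropLast with hυ'
    have hdecomp : υ' ++ [y] = υ := List.dropLast_append_getLast hne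
    have hυ'len : υ'.length = n - 1 := by
      have := congrArg List.length hdecomp
      simp at this
      omega
    have hυ'red : cs.IsReduced υ' := by
      rw [hυ', List.dropLast_eq_take]
      exact hυred.take _
    have hυ'eq : ℓ (π υ') = υ'.length := hυ'red
    have hυ'Y : ∀ b ∈ υ', b ∈ Y := fun b hb => hυY b (List.dropLast_subset υ hb)
    have hu' : π υ' ∈ cs.standardParabolic Y :=
      (mem_standardParabolic_iff cs Y _).mpr ⟨υ', hυ'Y, rfl⟩
    have hIH : ℓ (w * π υ') = ℓ w + (n - 1) :=
      ih (n - 1) (by omega) (π υ') hu' (by omega)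
    have husplit : π υ = π υ' * σ y := by
      conv_lhs => rw [← hdecomp]
      rw [cs.wordProd_append]
      simp
    have hyY : y ∈ Y := hυY y (List.getLast_mem hne)
    rcases cs.length_mul_simple (w * π υ') y with hcase | hcase
    · rw [husplit, ← mul_assoc, hcase, hIH]
      omega
    · exfalso
      have hne2 := cs.length_mul_simple_ne (w * π υ') y
      have hlt' : ℓ (w * π υ' * σ y) < ℓ (w * π υ') := by omega
      obtain ⟨κ, hκlen, hκw⟩ := cs.exists_reduced_word w
      replace hκlen : ℓ w = κ.length := by rw [hκw]; exact hκlen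
      have happred : cs.IsReduced (κ ++ υ') := by
        show ℓ (π (κ ++ υ')) = (κ ++ υ').length
        rw [cs.wordProd_append, ← hκw, hIH, List.length_append]
        omega
      have hlt : ℓ (π (κ ++ υ') * σ y) < ℓ (π (κ ++ υ')) := by
        rw [cs.wordProd_append, ← hκw]
        exact hlt'
      obtain ⟨j, hj, heq⟩ := exists_eraseIdx_of_lt cs happred (cs.isReflection_simple y) hlt
      rw [List.length_append] at hj
      by_cases hcase2 : j < κ.length
      · rw [List.eraseIdx_append_of_lt_length hcase2, cs.wordProd_append,
          cs.wordProd_append, ← hκw] at heq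
        have hconj : w * (π υ' * σ y * (π υ')⁻¹) = π (κ.eraseIdx j) := by
          have hx : w * (π υ' * σ y * (π υ')⁻¹)
              = (w * π υ' * σ y) * (π υ')⁻¹ := by group
          rw [hx, heq, mul_assoc, mul_inv_cancel, mul_one]
        have hmem : π υ' * σ y * (π υ')⁻¹ ∈ cs.standardParabolic Y :=
          mul_mem (mul_mem hu' (simple_mem_standardParabolic cs hyY)) (inv_mem hu')
        have h1 := hmin _ hmem
        rw [hconj] at h1
        have h2 : ℓ (π (κ.eraseIdx j)) ≤ (κ.eraseIdx j).length :=
          cs.length_wordProd_le _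
        have h3 : (κ.eraseIdx j).length + 1 = κ.length :=
          List.length_eraseIdx_add_one hcase2
        omega
      · rw [List.eraseIdx_append_of_length_le (by omega), cs.wordProd_append,
          cs.wordProd_append, ← hκw] at heq
        have hju : j - κ.length < υ'.length := by omega
        have hcancel : π υ' * σ y = π (υ'.eraseIdx (j - κ.length)) := by
          have hx : w * (π υ' * σ y) = w * π (υ'.eraseIdx (j - κ.length)) := by
            rw [← mul_assoc]; exact heq
          exact mul_left_cancel hx
        have h2 : ℓ (π υ' * σ y) ≤ (υ'.eraseIdx (j - κ.length)).length := by
          rw [hcancel]; exact cs.length_wordProd_le _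
        have h3 : (υ'.eraseIdx (j - κ.length)).length + 1 = υ'.length :=
          List.length_eraseIdx_add_one hju
        rw [← husplit, hυeq] at h2
        omega

lemma length_mul_left_of_min (X : Set B) (w : W)
    (hmin : ∀ v ∈ cs.standardParabolic X, ℓ w ≤ ℓ (v * w)) :
    ∀ v ∈ cs.standardParabolic X, ℓ (v * w) = ℓ v + ℓ w := by
  intro v hv
  have hmin' : ∀ u ∈ cs.standardParabolic X, ℓ w⁻¹ ≤ ℓ (w⁻¹ * u) := by
    intro u hu
    rw [cs.length_inv, show w⁻¹ * u = (u⁻¹ * w)⁻¹ from by group, cs.length_inv]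
    exact hmin u⁻¹ (inv_mem hu)
  have h := length_mul_right_of_min cs X w⁻¹ hmin' v⁻¹ (inv_mem hv)
  rw [show w⁻¹ * v⁻¹ = (v * w)⁻¹ from by group, cs.length_inv, cs.length_inv,
    cs.length_inv] at h
  omega

end CoxAux

/-- If `w` is `(X,Y)`-reduced, then `w·W_Y·w⁻¹ ∩ W_X` is a standard parabolic subgroup:
there exist `X₁ ⊆ X` and `Y₁ ⊆ Y` with `w·S_{Y₁}·w⁻¹ = w·S_Y·w⁻¹ ∩ S_X = S_{X₁}` and
`w·W_Y·w⁻¹ ∩ W_X = W_{X₁} = w·W_{Y₁}·w⁻¹`. -/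
theorem conj_parabolic_inter_parabolic_of_reduced {B W : Type*} [Group W] {M : CoxeterMatrix B}
    (cs : CoxeterSystem M W) (X Y : Set B) (w : W)
    (hw : ∀ x ∈ cs.standardParabolic X, ∀ y ∈ cs.standardParabolic Y,
      cs.length w ≤ cs.length (x * w * y)) :
    ∃ X₁ ⊆ X, ∃ Y₁ ⊆ Y,
      (fun t => w * t * w⁻¹) '' (cs.simple '' Y₁) =
        ((fun t => w * t * w⁻¹) '' (cs.simple '' Y)) ∩ (cs.simple '' X) ∧
      (fun t => w * t * w⁻¹) '' (cs.simple '' Y₁) = cs.simple '' X₁ ∧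
      (cs.standardParabolic Y).map (MulAut.conj w).toMonoidHom ⊓ cs.standardParabolic X =
        cs.standardParabolic X₁ ∧
      (cs.standardParabolic Y₁).map (MulAut.conj w).toMonoidHom = cs.standardParabolic X₁ := by
  classical
  set X₁ : Set B := {x | x ∈ X ∧ ∃ y ∈ Y, w * cs.simple y * w⁻¹ = cs.simple x} with hX₁
  set Y₁ : Set B := {y | y ∈ Y ∧ ∃ x ∈ X, w * cs.simple y * w⁻¹ = cs.simple x} with hY₁
  have hminR : ∀ u ∈ cs.standardParabolic Y, cs.length w ≤ cs.length (w * u) := by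
    intro u hu
    have := hw 1 (one_mem _) u hu
    simpa using this
  have hminL : ∀ v ∈ cs.standardParabolic X, cs.length w ≤ cs.length (v * w) := by
    intro v hv
    have := hw v hv 1 (one_mem _)
    simpa using this
  have haddR := CoxAux.length_mul_right_of_min cs Y w hminR
  have haddL := CoxAux.length_mul_left_of_min cs X w hminL
  -- The key lemma: `w (W_Y) w⁻¹ ∩ W_X ⊆ W_{X₁}`.
  have key : ∀ n : ℕ, ∀ u ∈ cs.standardParabolic Y, cs.length u = n →
      w * u * w⁻¹ ∈ cs.standardParabolic X →
      w * u * w⁻¹ ∈ cs.standardParabolic X₁ := by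
    intro n
    induction n using Nat.strong_induction_on with
    | _ n ih =>
      intro u hu hn hv
      rcases Nat.eq_zero_or_pos n with h0 | hpos
      · subst h0
        rw [cs.length_eq_zero_iff] at hn
        subst hn
        simpa using one_mem _
      obtain ⟨υ, hυred, hυY, huw⟩ := CoxAux.exists_reduced_word_subset cs Y u hu
      have hυeq : cs.length (cs.wordProd υ) = υ.length := hυred
      have hυlen : υ.length = n := by rw [← hυeq, ← huw]; exact hn
      have hne : υ ≠ [] := by intro hx; rw [hx] at hυlen; simp at hυlen; omega
      set y := υ.getLast hne with hy
      set υ' := υ.dropLast with hυ'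
      have hdecomp : υ' ++ [y] = υ := List.dropLast_append_getLast hne
      have hυ'len : υ'.length = n - 1 := by
        have := congrArg List.length hdecomp
        simp at this
        omega
      have hυ'red : cs.IsReduced υ' := by
        rw [hυ', List.dropLast_eq_take]
        exact hυred.take _
      have hυ'eq : cs.length (cs.wordProd υ') = υ'.length := hυ'red
      have hυ'Y : ∀ b ∈ υ', b ∈ Y := fun b hb => hυY b (List.dropLast_subset υ hb)
      set u' := cs.wordProd υ' with hu'def
      have hu' : u' ∈ cs.standardParabolic Y :=
        (CoxAux.mem_standardParabolic_iff cs Y _).mpr ⟨υ', hυ'Y, hu'def⟩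
      have hu'len : cs.length u' = n - 1 := by rw [hu'def, hυ'eq]; exact hυ'len
      have husplit : u = u' * cs.simple y := by
        rw [huw]
        conv_lhs => rw [← hdecomp]
        rw [cs.wordProd_append]
        simp [hu'def]
      have hyY : y ∈ Y := hυY y (List.getLast_mem hne)
      set v := w * u * w⁻¹ with hvdef
      obtain ⟨κ, hκred, hκX, hvw⟩ := CoxAux.exists_reduced_word_subset cs X v hv
      have hκeq : cs.length (cs.wordProd κ) = κ.length := hκred
      have hκlen : cs.length v = κ.length := by rw [hvw]; exact hκeq
      obtain ⟨ξ, hξlen, hξw⟩ := cs.exists_reduced_word w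
      replace hξlen : cs.length w = ξ.length := by rw [hξw]; exact hξlen
      have hvwprod : v * w = cs.wordProd (κ ++ ξ) := by
        rw [cs.wordProd_append, ← hvw, ← hξw]
      have happred : cs.IsReduced (κ ++ ξ) := by
        show cs.length (cs.wordProd (κ ++ ξ)) = (κ ++ ξ).length
        rw [← hvwprod, haddL v hv, List.length_append]
        omega
      have hvw_eq : v * w = w * u := by rw [hvdef]; group
      have husy : u * cs.simple y = u' := by
        rw [husplit, mul_assoc, cs.simple_mul_simple_self, mul_one]
      have hlt : cs.length (cs.wordProd (κ ++ ξ) * cs.simple y)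
          < cs.length (cs.wordProd (κ ++ ξ)) := by
        rw [← hvwprod, hvw_eq]
        have h1 : w * u * cs.simple y = w * u' := by rw [mul_assoc, husy]
        rw [h1, haddR u hu, haddR u' hu', hn, hu'len]
        omega
      obtain ⟨j, hj, heq⟩ := CoxAux.exists_eraseIdx_of_lt cs happred
        (cs.isReflection_simple y) hlt
      rw [List.length_append] at hj
      by_cases hcase : j < κ.length
      · -- the conjugated simple reflection `w (σ y) w⁻¹` lies in `W_X` and has length 1
        rw [List.eraseIdx_append_of_lt_length hcase, cs.wordProd_append,
          cs.wordProd_append, ← hξw, ← hvw] at heq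
        set vhat := cs.wordProd (κ.eraseIdx j) with hvhat
        have ht_eq : w * cs.simple y * w⁻¹ = v⁻¹ * vhat := by
          have h1 : v * (w * cs.simple y * w⁻¹) = vhat := by
            rw [show v * (w * cs.simple y * w⁻¹) = (v * w * cs.simple y) * w⁻¹ from by
              group, heq, mul_assoc, mul_inv_cancel, mul_one]
          rw [← h1]
          group
        set t := w * cs.simple y * w⁻¹ with htdef
        have htX : t ∈ cs.standardParabolic X := by
          rw [ht_eq]
          exact mul_mem (inv_mem hv)
            ((CoxAux.mem_standardParabolic_iff cs X _).mpr
              ⟨κ.eraseIdx j, fun b hb => hκX b (List.mem_of_mem_eraseIdx hb), hvhat⟩)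
        have htw : t * w = w * cs.simple y := by rw [htdef]; group
        have hwsy : cs.length (w * cs.simple y) = cs.length w + 1 := by
          have hge := hminR (cs.simple y) (CoxAux.simple_mem_standardParabolic cs hyY)
          have hne' := cs.length_mul_simple_ne w y
          rcases cs.length_mul_simple w y with h1 | h1 <;> omega
        have htlen : cs.length t = 1 := by
          have hx := haddL t htX
          rw [htw, hwsy] at hx
          omega
        obtain ⟨ρ, hρred, hρX, htρ⟩ := CoxAux.exists_reduced_word_subset cs X t htX
        have hρeq : cs.length (cs.wordProd ρ) = ρ.length := hρred
        have hρlen : ρ.length = 1 := by rw [← hρeq, ← htρ]; exact htlen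
        obtain ⟨x, rfl⟩ := List.length_eq_one_iff.mp hρlen
        have htx : t = cs.simple x := by rw [htρ]; simp
        have hxX : x ∈ X := hρX x (List.mem_singleton_self x)
        have hxX₁ : x ∈ X₁ := ⟨hxX, y, hyY, by rw [← htdef, htx]⟩
        have htt : t * t = 1 := by
          rw [htx, cs.simple_mul_simple_self]
        have hvt : v * t = w * u' * w⁻¹ := by
          rw [hvdef, htdef, show (w * u * w⁻¹) * (w * cs.simple y * w⁻¹)
            = w * (u * cs.simple y) * w⁻¹ from by group, husy]
        have hvtX : w * u' * w⁻¹ ∈ cs.standardParabolic X := by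
          rw [← hvt, htx]
          exact mul_mem hv (CoxAux.simple_mem_standardParabolic cs hxX)
        have hIH : w * u' * w⁻¹ ∈ cs.standardParabolic X₁ :=
          ih (n - 1) (by omega) u' hu' hu'len hvtX
        have hfinal : v = (w * u' * w⁻¹) * t := by
          rw [← hvt, mul_assoc, htt, mul_one]
        rw [hvdef] at hfinal ⊢
        rw [hfinal, htx]
        exact mul_mem hIH (CoxAux.simple_mem_standardParabolic cs hxX₁)
      · exfalso
        rw [List.eraseIdx_append_of_length_le (by omega), cs.wordProd_append,
          cs.wordProd_append, ← hξw, ← hvw] at heq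
        have hju : j - κ.length < ξ.length := by omega
        have hcancel : w * cs.simple y = cs.wordProd (ξ.eraseIdx (j - κ.length)) := by
          have h1 : v * (w * cs.simple y) = v * cs.wordProd (ξ.eraseIdx (j - κ.length)) := by
            rw [← mul_assoc]; exact heq
          exact mul_left_cancel h1
        have h2 : cs.length (w * cs.simple y) ≤ (ξ.eraseIdx (j - κ.length)).length := by
          rw [hcancel]; exact cs.length_wordProd_le _
        have h3 : (ξ.eraseIdx (j - κ.length)).length + 1 = ξ.length :=
          List.length_eraseIdx_add_one hju
        have h4 := hminR (cs.simple y) (CoxAux.simple_mem_standardParabolic cs hyY)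
        omega
  -- the two set equalities
  have hset2 : (fun t => w * t * w⁻¹) '' (cs.simple '' Y₁) = cs.simple '' X₁ := by
    ext t
    simp only [Set.mem_image, hX₁, hY₁, Set.mem_setOf_eq]
    constructor
    · rintro ⟨_, ⟨y, ⟨hyY, x, hxX, hconj⟩, rfl⟩, rfl⟩
      exact ⟨x, ⟨hxX, y, hyY, hconj⟩, hconj.symm⟩
    · rintro ⟨x, ⟨hxX, y, hyY, hconj⟩, rfl⟩
      exact ⟨cs.simple y, ⟨y, ⟨hyY, x, hxX, hconj⟩, rfl⟩, hconj⟩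
  have hset1 : (fun t => w * t * w⁻¹) '' (cs.simple '' Y₁) =
      ((fun t => w * t * w⁻¹) '' (cs.simple '' Y)) ∩ (cs.simple '' X) := by
    ext t
    simp only [Set.mem_image, Set.mem_inter_iff, hY₁, Set.mem_setOf_eq]
    constructor
    · rintro ⟨_, ⟨y, ⟨hyY, x, hxX, hconj⟩, rfl⟩, rfl⟩
      exact ⟨⟨cs.simple y, ⟨y, hyY, rfl⟩, rfl⟩, x, hxX, hconj.symm⟩
    · rintro ⟨⟨_, ⟨y, hyY, rfl⟩, rfl⟩, x, hxX, hconj⟩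
      exact ⟨cs.simple y, ⟨y, ⟨hyY, x, hxX, hconj.symm⟩, rfl⟩, rfl⟩
  have hconjfun : ⇑(MulAut.conj w).toMonoidHom = fun t : W => w * t * w⁻¹ := by
    funext t
    simp [MulAut.conj_apply]
  refine ⟨X₁, fun x hx => hx.1, Y₁, fun y hy => hy.1, hset1, hset2, ?_, ?_⟩
  · -- the subgroup equality
    apply le_antisymm
    · intro v hv
      obtain ⟨hv1, hv2⟩ := Subgroup.mem_inf.mp hv
      obtain ⟨u, hu, rfl⟩ := Subgroup.mem_map.mp hv1
      have hconj : (MulAut.conj w).toMonoidHom u = w * u * w⁻¹ := by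
        simp [MulAut.conj_apply]
      rw [hconj] at hv2 ⊢
      exact key (cs.length u) u hu rfl hv2
    · refine (Subgroup.closure_le _).mpr ?_
      rintro _ ⟨x, hx, rfl⟩
      obtain ⟨hxX, y, hyY, hconj⟩ := hx
      refine Subgroup.mem_inf.mpr ⟨?_, ?_⟩
      · apply Subgroup.mem_map.mpr
        refine ⟨cs.simple y, CoxAux.simple_mem_standardParabolic cs hyY, ?_⟩
        simpa [MulAut.conj_apply] using hconj
      · exact CoxAux.simple_mem_standardParabolic cs hxX
  · -- the conjugated parabolic
    have hmapcl : (cs.standardParabolic Y₁).map (MulAut.conj w).toMonoidHom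
        = Subgroup.closure (((MulAut.conj w).toMonoidHom : W → W) '' (cs.simple '' Y₁)) :=
      MonoidHom.map_closure _ _
    rw [hmapcl, hconjfun, hset2]
    rfl
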